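/- Let a, b ≥ 0 and c ≥ 1. Suppose the complex numbers α_1, …, α_{b+c} are pairwise distinct and set β_{a+c} := α_{b+c}. Then Φ_{a,b,c}(α_1,…,α_{b+c}; β_1,…,β_{a+c−1}, α_{b+c}; γ_1,…,γ_{a+b}) = (−1)^b · (∏_{k=1}^{a+b} (α_{b+c} − γ_k)) · Φ_{a,b,c−1}(α_1,…,α_{b+c−1}; β_1,…,β_{a+c−1}; γ_1,…,γ_{a+b}). (This is the key recurrence relation, Eq. (2.5) of the paper, with the sign fixed by the explicit definition of Φ.) -/

import Mathlib

/-- Eq. (2.6) of the paper: the explicit formula for the component of the O(1) loop model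
ground state corresponding to three series of nested arches of sizes `a`, `b`, `c`. -/
noncomputable def Phi (a b c : ℕ) (α : Fin (b + c) → ℂ) (β : Fin (a + c) → ℂ)
    (γ : Fin (a + b) → ℂ) : ℂ :=
  ∑ I ∈ Finset.powersetCard c (Finset.univ : Finset (Fin (b + c))),
    ((∏ i ∈ Iᶜ, ∏ j, (α i - β j)) * ∏ i ∈ I, ∏ k, (α i - γ k)) /
      ∏ i ∈ I, ∏ j ∈ Iᶜ, (α i - α j)

/-- The embedding `Fin n ↪ Fin (n+1)` via `castSucc`. -/
def csEmb (n : ℕ) : Fin n ↪ Fin (n + 1) := ⟨Fin.castSucc, Fin.castSucc_injective n⟩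

@[simp] lemma csEmb_apply (n : ℕ) (i : Fin n) : csEmb n i = i.castSucc := rfl

lemma neg_prod_flip {ι : Type*} (s : Finset ι) (f : ι → ℂ) :
    ∏ i ∈ s, -f i = (-1) ^ s.card * ∏ i ∈ s, f i := by
  rw [← Finset.prod_const, ← Finset.prod_mul_distrib]
  simp

/-- The key recurrence relation (Eq. (2.5) of the paper, sign fixed by the explicit
definition of `Phi`): setting `β_{a+c} = α_{b+c}` reduces `Φ_{a,b,c}` to `Φ_{a,b,c-1}`.
Here the statement is given for `c + 1` in place of `c`, realizing the hypothesis `c ≥ 1`. -/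
theorem razumov_stroganov_recurrence (a b c : ℕ)
    (α : Fin (b + (c + 1)) → ℂ) (β : Fin (a + (c + 1)) → ℂ) (γ : Fin (a + b) → ℂ)
    (hα : Function.Injective α)
    (hβ : β (Fin.last (a + c)) = α (Fin.last (b + c))) :
    Phi a b (c + 1) α β γ =
      (-1) ^ b * (∏ k, (α (Fin.last (b + c)) - γ k)) *
        Phi a b c (fun i => α i.castSucc) (fun j => β j.castSucc) γ := by
  classical
  set L : Fin (b + (c + 1)) := Fin.last (b + c) with hLdef
  set e : Fin (b + c) ↪ Fin (b + (c + 1)) := csEmb (b + c) with hedef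
  have hins : ∀ J : Finset (Fin (b + c)), L ∉ J.map e := by
    intro J hJ
    obtain ⟨j, -, hj⟩ := Finset.mem_map.mp hJ
    exact (Fin.castSucc_lt_last j).ne hj
  unfold Phi
  rw [← Finset.sum_filter_add_sum_filter_not
    (Finset.powersetCard (c + 1) (Finset.univ : Finset (Fin (b + (c + 1))))) (fun I => L ∈ I)]
  have h0 : (∑ I ∈ (Finset.powersetCard (c + 1)
        (Finset.univ : Finset (Fin (b + (c + 1))))).filter (fun I => ¬ L ∈ I),
      ((∏ i ∈ Iᶜ, ∏ j, (α i - β j)) * ∏ i ∈ I, ∏ k, (α i - γ k)) /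
        ∏ i ∈ I, ∏ j ∈ Iᶜ, (α i - α j)) = 0 := by
    refine Finset.sum_eq_zero fun I hI => ?_
    rw [Finset.mem_filter] at hI
    have hz : (∏ i ∈ Iᶜ, ∏ j, (α i - β j)) = 0 := by
      refine Finset.prod_eq_zero (Finset.mem_compl.mpr hI.2) ?_
      refine Finset.prod_eq_zero (Finset.mem_univ (Fin.last (a + c))) ?_
      rw [hβ]; exact sub_self _
    rw [hz, zero_mul, zero_div]
  rw [h0, add_zero]
  have hset : (Finset.powersetCard (c + 1)
        (Finset.univ : Finset (Fin (b + (c + 1))))).filter (fun I => L ∈ I)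
      = (Finset.powersetCard c (Finset.univ : Finset (Fin (b + c)))).map
        ⟨fun J => insert L (J.map e), by
          have hinj : Function.Injective (fun J : Finset (Fin (b + c)) => insert L (J.map e)) := by
            intro J₁ J₂ h
            have h' : J₁.map e = J₂.map e := by
              have := congrArg (fun s => Finset.erase s L) h
              simpa [Finset.erase_insert (hins J₁), Finset.erase_insert (hins J₂)] using this
            exact Finset.map_inj.mp h'
          exact hinj⟩ := by
    ext I
    simp only [Finset.mem_filter, Finset.mem_powersetCard_univ, Finset.mem_map,
      Function.Embedding.coeFn_mk]
    constructor
    · rintro ⟨hcard, hmem⟩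
      refine ⟨(I.erase L).preimage Fin.castSucc (Fin.castSucc_injective _).injOn, ?_, ?_⟩
      all_goals
        have hmap : ((I.erase L).preimage Fin.castSucc
            (Fin.castSucc_injective _).injOn).map e = I.erase L := by
          ext x
          simp only [Finset.mem_map, Finset.mem_preimage, hedef, csEmb,
            Function.Embedding.coeFn_mk]
          constructor
          · rintro ⟨y, hy, rfl⟩; exact hy
          · intro hx
            obtain ⟨y, rfl⟩ :=
              Fin.exists_castSucc_eq.mpr (Finset.ne_of_mem_erase hx)
            exact ⟨y, hx, rfl⟩
      · have := congrArg Finset.card hmap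
        rw [Finset.card_map] at this
        rw [this, Finset.card_erase_of_mem hmem, hcard]
        omega
      · rw [hmap, Finset.insert_erase hmem]
    · rintro ⟨J, hJ, rfl⟩
      refine ⟨?_, Finset.mem_insert_self _ _⟩
      rw [Finset.card_insert_of_notMem (hins J), Finset.card_map, hJ]
  rw [hset, Finset.sum_map, Finset.mul_sum]
  refine Finset.sum_congr rfl fun J hJ => ?_
  rw [Finset.mem_powersetCard_univ] at hJ
  simp only [Function.Embedding.coeFn_mk]
  -- the complement of the inserted set
  have hIc : (insert L (J.map e))ᶜ = Jᶜ.map e := by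
    ext x
    simp only [Finset.mem_compl, Finset.mem_insert, Finset.mem_map, hedef, csEmb,
      Function.Embedding.coeFn_mk, not_or]
    rcases Fin.eq_castSucc_or_eq_last x with ⟨j, rfl⟩ | rfl
    · constructor
      · rintro ⟨-, h2⟩
        exact ⟨j, fun hj => h2 ⟨j, hj, rfl⟩, rfl⟩
      · rintro ⟨y, hy, hxy⟩
        obtain rfl := Fin.castSucc_injective _ hxy
        refine ⟨(Fin.castSucc_lt_last _).ne, ?_⟩
        rintro ⟨z, hz, hzj⟩
        exact hy (by rwa [Fin.castSucc_injective _ hzj] at hz)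
    · constructor
      · rintro ⟨h1, -⟩; exact absurd rfl h1
      · rintro ⟨y, -, hy⟩; exact absurd hy (Fin.castSucc_lt_last y).ne
  have hcardc : Jᶜ.card = b := by
    rw [Finset.card_compl, hJ]
    simp
  have hA : (∏ i ∈ (insert L (J.map e))ᶜ, ∏ j, (α i - β j))
      = ((-1 : ℂ) ^ b * ∏ i ∈ Jᶜ, (α L - α i.castSucc)) *
        ∏ i ∈ Jᶜ, ∏ j : Fin (a + c), (α i.castSucc - β j.castSucc) := by
    rw [hIc, Finset.prod_map]
    have hstep : ∀ i : Fin (b + c),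
        (∏ j, (α (e i) - β j))
          = (∏ j : Fin (a + c), (α i.castSucc - β j.castSucc)) * -(α L - α i.castSucc) := by
      intro i
      rw [show (∏ j, (α (e i) - β j))
          = ∏ j : Fin ((a + c) + 1), (α i.castSucc - β j) from rfl,
        Fin.prod_univ_castSucc, hβ]
      ring
    rw [Finset.prod_congr rfl fun i _ => hstep i, Finset.prod_mul_distrib,
      neg_prod_flip, hcardc]
    ring
  have hB : (∏ i ∈ insert L (J.map e), ∏ k, (α i - γ k))
      = (∏ k, (α L - γ k)) * ∏ i ∈ J, ∏ k, (α i.castSucc - γ k) := by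
    rw [Finset.prod_insert (hins J), Finset.prod_map]
    rfl
  have hD : (∏ i ∈ insert L (J.map e), ∏ j ∈ (insert L (J.map e))ᶜ, (α i - α j))
      = (∏ j ∈ Jᶜ, (α L - α j.castSucc)) *
        ∏ i ∈ J, ∏ j ∈ Jᶜ, (α i.castSucc - α j.castSucc) := by
    rw [Finset.prod_insert (hins J), hIc]
    congr 1
    · rw [Finset.prod_map]; rfl
    · rw [Finset.prod_map]
      refine Finset.prod_congr rfl fun i _ => ?_
      rw [Finset.prod_map]
      rfl
  have hP : (∏ j ∈ Jᶜ, (α L - α j.castSucc)) ≠ 0 := by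
    rw [Finset.prod_ne_zero_iff]
    intro j _
    exact sub_ne_zero.mpr fun h => (Fin.castSucc_lt_last j).ne' (hα h)
  have hDne : (∏ i ∈ J, ∏ j ∈ Jᶜ, (α i.castSucc - α j.castSucc)) ≠ 0 := by
    rw [Finset.prod_ne_zero_iff]
    intro i hi
    rw [Finset.prod_ne_zero_iff]
    intro j hj
    refine sub_ne_zero.mpr fun h => ?_
    obtain rfl : i = j := Fin.castSucc_injective _ (hα h)
    exact (Finset.mem_compl.mp hj) hi
  rw [hA, hB, hD]
  field_simp
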